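/- arXiv:1406.6706 — 5 statements merged into one kernel-verified Lean document; each statement's English description precedes it below -/
import Mathlib

section
/- For every wff A, the image E(A) is an evaluation-free wff, i.e., every occurrence of the evaluation constructor in E(A) lies within a quotation. -/
/-- The inductive type of type symbols of Q0-uqe: base types ι, o, ε and
the two binary type constructors (αβ) (functions from β to α) and ⟨αβ⟩ (ordered pairs). -/
inductive Typ : Type
  | iota : Typ
  | o : Typ
  | eps : Typ
  | fn : Typ → Typ → Typ
  | prod : Typ → Typ → Typ
  deriving DecidableEq

/-- The (intrinsically typed) wffs of Q0-uqe: variables, primitive constants,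
function application, function abstraction, conditionals, quotation and evaluation.
In `eval A n α`, `(n, α)` is the variable serving as the second argument of the
evaluation (it only fixes the type `α` of the evaluation). -/
inductive Wff : Typ → Type
  | var (n : ℕ) (α : Typ) : Wff α
  | con (n : ℕ) (α : Typ) : Wff α
  | app {α β : Typ} (A : Wff (Typ.fn α β)) (B : Wff β) : Wff α
  | abs {α : Typ} (n : ℕ) (β : Typ) (B : Wff α) : Wff (Typ.fn α β)
  | cond {α : Typ} (A : Wff Typ.o) (B C : Wff α) : Wff α
  | quot {α : Typ} (A : Wff α) : Wff Typ.eps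
  | eval (A : Wff Typ.eps) (n : ℕ) (α : Typ) : Wff α

def tyBin : Typ := Typ.fn (Typ.fn Typ.eps Typ.eps) Typ.eps
def tyTer : Typ := Typ.fn (Typ.fn (Typ.fn Typ.eps Typ.eps) Typ.eps) Typ.eps
def tyUn : Typ := Typ.fn Typ.eps Typ.eps

/-- The logical constants `app`, `abs`, `cond`, `quot`, `eval` (distinct primitive
constants used to build syntactic representations of wffs). -/
def cApp : Wff tyBin := Wff.con 0 tyBin
def cAbs : Wff tyBin := Wff.con 1 tyBin
def cCond : Wff tyTer := Wff.con 2 tyTer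
def cQuot : Wff tyUn := Wff.con 3 tyUn
def cEval : Wff tyBin := Wff.con 4 tyBin

/-- The syntactic representation function E from wffs to wffs of type ε. -/
def E : {α : Typ} → Wff α → Wff Typ.eps
  | _, Wff.var n α => Wff.quot (Wff.var n α)
  | _, Wff.con n α => Wff.quot (Wff.con n α)
  | _, Wff.app A B => Wff.app (Wff.app cApp (E A)) (E B)
  | _, Wff.abs n β B => Wff.app (Wff.app cAbs (Wff.quot (Wff.var n β))) (E B)
  | _, Wff.cond A B C => Wff.app (Wff.app (Wff.app cCond (E A)) (E B)) (E C)
  | _, Wff.quot A => Wff.app cQuot (E A)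
  | _, Wff.eval A n α => Wff.app (Wff.app cEval (E A)) (Wff.quot (Wff.var n α))

/-- A wff is evaluation-free if each occurrence of an evaluation in it is
within a quotation. -/
def evalFree : {α : Typ} → Wff α → Prop
  | _, Wff.var _ _ => True
  | _, Wff.con _ _ => True
  | _, Wff.app A B => evalFree A ∧ evalFree B
  | _, Wff.abs _ _ B => evalFree B
  | _, Wff.cond A B C => evalFree A ∧ evalFree B ∧ evalFree C
  | _, Wff.quot _ => True
  | _, Wff.eval _ _ _ => False

/-- The size of a wff: the number of variable and primitive-constant occurrences. -/
def sizeW : {α : Typ} → Wff α → ℕ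
  | _, Wff.var _ _ => 1
  | _, Wff.con _ _ => 1
  | _, Wff.app A B => sizeW A + sizeW B
  | _, Wff.abs _ _ B => 1 + sizeW B
  | _, Wff.cond A B C => sizeW A + sizeW B + sizeW C
  | _, Wff.quot A => sizeW A
  | _, Wff.eval A _ _ => sizeW A + 1

/-- The number of evaluations occurring in a wff that are not within a quotation. -/
def numEvals : {α : Typ} → Wff α → ℕ
  | _, Wff.var _ _ => 0
  | _, Wff.con _ _ => 0
  | _, Wff.app A B => numEvals A + numEvals B
  | _, Wff.abs _ _ B => numEvals B
  | _, Wff.cond A B C => numEvals A + numEvals B + numEvals C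
  | _, Wff.quot _ => 0
  | _, Wff.eval A _ _ => numEvals A + 1

/-- The complexity of a wff: the pair (number of evaluations not within a
quotation, size). -/
def complexity {α : Typ} (A : Wff α) : ℕ × ℕ := (numEvals A, sizeW A)

/-- The (syntactic) free-variable relation: `freeIn n α A` means the variable
`(n, α)` is free in `A` (variables within quotations, and the variable serving as
the second argument of an evaluation, are not free occurrences). -/
def freeIn (n : ℕ) (α : Typ) : {γ : Typ} → Wff γ → Prop
  | _, Wff.var m β => n = m ∧ α = β
  | _, Wff.con _ _ => False
  | _, Wff.app A B => freeIn n α A ∨ freeIn n α B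
  | _, Wff.abs m β B => ¬(n = m ∧ α = β) ∧ freeIn n α B
  | _, Wff.cond A B C => freeIn n α A ∨ freeIn n α B ∨ freeIn n α C
  | _, Wff.quot _ => False
  | _, Wff.eval A _ _ => freeIn n α A

/-- For every wff A, the image E(A) is evaluation-free. -/
theorem stmt3 {α : Typ} (A : Wff α) : evalFree (E A) := by
  induction A <;> simp_all [E, evalFree, cApp, cAbs, cCond, cQuot, cEval]
end

section
/- In a normal general model, if the value of app applied to constructions x and y is defined, then x and y are both standard constructions (i.e., of the form E(A) for some wff A) if and only if the resulting value app x y is a standard construction. -/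
/-- An assignment into a frame `D`: it maps each variable `(n, α)` to an element
of the domain `D α`. -/
def Assign (D : Typ → Type) : Type := ∀ α : Typ, ℕ → D α

/-- Updating an assignment at the variable `(n, β)` with the value `d`. -/
def Assign.upd {D : Typ → Type} (φ : Assign D) (β : Typ) (n : ℕ) (d : D β) : Assign D :=
  fun γ m =>
    if h : γ = β then (if m = n then cast (congrArg D h.symm) d else φ γ m) else φ γ m

/-- The type of the equality constants Q_{oαα}. -/
def tyQ (α : Typ) : Typ := Typ.fn (Typ.fn Typ.o α) α

/-- A (Henkin-style) general model for Q0-uqe: a frame of nonempty domains with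
D_o = {T, F}, constructions E(A) among the elements of D_ε (via the injection
`embE`), partial-function application `appD`, an interpretation `J` of the
primitive constants (with Q interpreted as identity), and a possibly-partial
valuation function `V` satisfying the semantic conditions of a general model. -/
structure GeneralModel where
  D : Typ → Type
  inh : ∀ α : Typ, Nonempty (D α)
  valT : D Typ.o
  valF : D Typ.o
  distinctTF : valT ≠ valF
  bool_only : ∀ x : D Typ.o, x = valT ∨ x = valF
  /-- the element of D_ε representing the construction E(A), for a wff A -/
  embE : (Σ α : Typ, Wff α) → D Typ.eps
  embE_inj : Function.Injective embE
  /-- application of the (partial or total) functions in the function domains -/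
  appD : ∀ {α β : Typ}, D (Typ.fn α β) → D β → Option (D α)
  /-- functions of type (oβ) are total -/
  appD_o_total : ∀ {β : Typ} (f : D (Typ.fn Typ.o β)) (b : D β), (appD f b).isSome
  /-- interpretation of the primitive constants -/
  J : ∀ α : Typ, ℕ → D α
  /-- the valuation function -/
  V : Assign D → {α : Typ} → Wff α → Option (D α)
  V_var : ∀ (φ : Assign D) (n : ℕ) (α : Typ), V φ (Wff.var n α) = some (φ α n)
  V_con : ∀ (φ : Assign D) (n : ℕ) (α : Typ), V φ (Wff.con n α) = some (J α n)
  V_o_total : ∀ (φ : Assign D) (A : Wff Typ.o), (V φ A).isSome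
  V_app_some : ∀ (φ : Assign D) {α β : Typ} (A : Wff (Typ.fn α β)) (B : Wff β) f b v,
    V φ A = some f → V φ B = some b → appD f b = some v →
    V φ (Wff.app A B) = some v
  V_app_none_o : ∀ (φ : Assign D) {β : Typ} (A : Wff (Typ.fn Typ.o β)) (B : Wff β),
    ((V φ A).bind fun f => (V φ B).bind fun b => appD f b) = none →
    V φ (Wff.app A B) = some valF
  V_app_none : ∀ (φ : Assign D) {α β : Typ} (A : Wff (Typ.fn α β)) (B : Wff β),
    α ≠ Typ.o →
    ((V φ A).bind fun f => (V φ B).bind fun b => appD f b) = none →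
    V φ (Wff.app A B) = none
  V_abs : ∀ (φ : Assign D) {α : Typ} (n : ℕ) (β : Typ) (B : Wff α),
    ∃ f, V φ (Wff.abs n β B) = some f ∧
      ∀ d : D β, appD f d = V (Assign.upd φ β n d) B
  V_cond_T : ∀ (φ : Assign D) {α : Typ} (A : Wff Typ.o) (B C : Wff α),
    V φ A = some valT → V φ (Wff.cond A B C) = V φ B
  V_cond_F : ∀ (φ : Assign D) {α : Typ} (A : Wff Typ.o) (B C : Wff α),
    V φ A = some valF → V φ (Wff.cond A B C) = V φ C
  V_quot : ∀ (φ : Assign D) {α : Typ} (A : Wff α),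
    V φ (Wff.quot A) = some (embE ⟨α, A⟩)
  V_eval_some : ∀ (φ : Assign D) (A : Wff Typ.eps) (n : ℕ) {α : Typ} (B : Wff α),
    evalFree B → V φ A = some (embE ⟨α, B⟩) → (V φ B).isSome →
    V φ (Wff.eval A n α) = V φ B
  V_eval_none_o : ∀ (φ : Assign D) (A : Wff Typ.eps) (n : ℕ),
    ¬ (∃ B : Wff Typ.o, evalFree B ∧ V φ A = some (embE ⟨Typ.o, B⟩) ∧ (V φ B).isSome) →
    V φ (Wff.eval A n Typ.o) = some valF
  V_eval_none : ∀ (φ : Assign D) (A : Wff Typ.eps) (n : ℕ) {α : Typ}, α ≠ Typ.o →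
    ¬ (∃ B : Wff α, evalFree B ∧ V φ A = some (embE ⟨α, B⟩) ∧ (V φ B).isSome) →
    V φ (Wff.eval A n α) = none
  /-- Q_{oαα} is interpreted as the identity relation on D_α -/
  V_Q_refl : ∀ {α : Typ} (x : D α),
    ((appD (J (tyQ α) 8) x).bind fun g => appD g x) = some valT
  V_Q_ne : ∀ {α : Typ} (x y : D α), x ≠ y →
    ((appD (J (tyQ α) 8) x).bind fun g => appD g y) = some valF

namespace GeneralModel

/-- The operation on constructions denoted by the logical constant app_εεε. -/
def opApp (M : GeneralModel) (x y : M.D Typ.eps) : Option (M.D Typ.eps) :=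
  (M.appD (M.J tyBin 0) x).bind fun g => M.appD g y

/-- The operation on constructions denoted by the logical constant abs_εεε. -/
def opAbs (M : GeneralModel) (x y : M.D Typ.eps) : Option (M.D Typ.eps) :=
  (M.appD (M.J tyBin 1) x).bind fun g => M.appD g y

/-- The operation on constructions denoted by the logical constant cond_εεεε. -/
def opCond (M : GeneralModel) (x y z : M.D Typ.eps) : Option (M.D Typ.eps) :=
  (M.appD (M.J tyTer 2) x).bind fun g => (M.appD g y).bind fun h => M.appD h z

/-- The operation on constructions denoted by the logical constant quot_εε. -/
def opQuot (M : GeneralModel) (x : M.D Typ.eps) : Option (M.D Typ.eps) :=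
  M.appD (M.J tyUn 3) x

/-- The operation on constructions denoted by the logical constant eval_εεε. -/
def opEval (M : GeneralModel) (x y : M.D Typ.eps) : Option (M.D Typ.eps) :=
  (M.appD (M.J tyBin 4) x).bind fun g => M.appD g y

/-- The operation on constructions denoted by the logical constant sub_εεεε. -/
def opSub (M : GeneralModel) (x y z : M.D Typ.eps) : Option (M.D Typ.eps) :=
  (M.appD (M.J tyTer 5) x).bind fun g => (M.appD g y).bind fun h => M.appD h z

def tyNfi : Typ := Typ.fn (Typ.fn Typ.o Typ.eps) Typ.eps

/-- The predicate on constructions denoted by the logical constant not-free-in_oεε. -/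
def opNotFreeIn (M : GeneralModel) (x y : M.D Typ.eps) : Option (M.D Typ.o) :=
  (M.appD (M.J tyNfi 6) x).bind fun g => M.appD g y

/-- The operation on constructions denoted by the logical constant cleanse_εε. -/
def opCleanse (M : GeneralModel) (x : M.D Typ.eps) : Option (M.D Typ.eps) :=
  M.appD (M.J tyUn 7) x

/-- The construction representing the variable (n, α). -/
def vE (M : GeneralModel) (n : ℕ) (α : Typ) : M.D Typ.eps :=
  M.embE ⟨α, Wff.var n α⟩

end GeneralModel
/-- A normal general model: a general model satisfying the specifying axioms
(Specifications 1–9) for the logical constants involving the type ε, here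
stated on the standard constructions (the representations E(A) of wffs A). -/
structure NormalModel extends GeneralModel where
  /-- Spec 4/6: app on standard constructions builds the representation of an
  application, fails on type mismatch, and is injective with shape inversion. -/
  app_std : ∀ {α β : Typ} (A : Wff (Typ.fn α β)) (B : Wff β),
    toGeneralModel.opApp (embE ⟨Typ.fn α β, A⟩) (embE ⟨β, B⟩) =
      some (embE ⟨α, Wff.app A B⟩)
  app_mismatch : ∀ {γ δ : Typ} (A : Wff γ) (B : Wff δ), (∀ α : Typ, γ ≠ Typ.fn α δ) →
    toGeneralModel.opApp (embE ⟨γ, A⟩) (embE ⟨δ, B⟩) = none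
  app_inv : ∀ (x y : D Typ.eps) {γ : Typ} (C : Wff γ),
    toGeneralModel.opApp x y = some (embE ⟨γ, C⟩) →
    ∃ (β : Typ) (A : Wff (Typ.fn γ β)) (B : Wff β),
      C = Wff.app A B ∧ x = embE ⟨Typ.fn γ β, A⟩ ∧ y = embE ⟨β, B⟩
  abs_std : ∀ {α : Typ} (n : ℕ) (β : Typ) (B : Wff α),
    toGeneralModel.opAbs (embE ⟨β, Wff.var n β⟩) (embE ⟨α, B⟩) =
      some (embE ⟨Typ.fn α β, Wff.abs n β B⟩)
  cond_std : ∀ {α : Typ} (A : Wff Typ.o) (B C : Wff α),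
    toGeneralModel.opCond (embE ⟨Typ.o, A⟩) (embE ⟨α, B⟩) (embE ⟨α, C⟩) =
      some (embE ⟨α, Wff.cond A B C⟩)
  quot_std : ∀ {α : Typ} (A : Wff α),
    toGeneralModel.opQuot (embE ⟨α, A⟩) = some (embE ⟨Typ.eps, Wff.quot A⟩)
  eval_std : ∀ (A : Wff Typ.eps) (n : ℕ) (α : Typ),
    toGeneralModel.opEval (embE ⟨Typ.eps, A⟩) (embE ⟨α, Wff.var n α⟩) =
      some (embE ⟨α, Wff.eval A n α⟩)
  /-- Spec 7: the not-free-in predicate. -/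
  nfi_total : ∀ x y : D Typ.eps, (toGeneralModel.opNotFreeIn x y).isSome
  nfi_self : ∀ (n : ℕ) (α : Typ),
    toGeneralModel.opNotFreeIn (toGeneralModel.vE n α) (toGeneralModel.vE n α) = some valF
  nfi_var_ne : ∀ (n m : ℕ) (α β : Typ), (n, α) ≠ (m, β) →
    toGeneralModel.opNotFreeIn (toGeneralModel.vE n α) (toGeneralModel.vE m β) = some valT
  nfi_con : ∀ (n : ℕ) (α : Typ) (m : ℕ) (β : Typ),
    toGeneralModel.opNotFreeIn (toGeneralModel.vE n α) (embE ⟨β, Wff.con m β⟩) = some valT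
  nfi_app : ∀ (n : ℕ) (α : Typ) {γ δ : Typ} (A : Wff (Typ.fn γ δ)) (B : Wff δ),
    toGeneralModel.opNotFreeIn (toGeneralModel.vE n α) (embE ⟨γ, Wff.app A B⟩) = some valT ↔
      (toGeneralModel.opNotFreeIn (toGeneralModel.vE n α) (embE ⟨Typ.fn γ δ, A⟩) = some valT ∧
       toGeneralModel.opNotFreeIn (toGeneralModel.vE n α) (embE ⟨δ, B⟩) = some valT)
  nfi_abs_same : ∀ (n : ℕ) (α : Typ) {γ : Typ} (B : Wff γ),
    toGeneralModel.opNotFreeIn (toGeneralModel.vE n α)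
      (embE ⟨Typ.fn γ α, Wff.abs n α B⟩) = some valT
  nfi_abs_ne : ∀ (n m : ℕ) (α β : Typ) {γ : Typ} (B : Wff γ), (n, α) ≠ (m, β) →
    (toGeneralModel.opNotFreeIn (toGeneralModel.vE n α)
        (embE ⟨Typ.fn γ β, Wff.abs m β B⟩) = some valT ↔
      toGeneralModel.opNotFreeIn (toGeneralModel.vE n α) (embE ⟨γ, B⟩) = some valT)
  nfi_cond : ∀ (n : ℕ) (α : Typ) {γ : Typ} (A : Wff Typ.o) (B C : Wff γ),
    toGeneralModel.opNotFreeIn (toGeneralModel.vE n α) (embE ⟨γ, Wff.cond A B C⟩) = some valT ↔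
      (toGeneralModel.opNotFreeIn (toGeneralModel.vE n α) (embE ⟨Typ.o, A⟩) = some valT ∧
       toGeneralModel.opNotFreeIn (toGeneralModel.vE n α) (embE ⟨γ, B⟩) = some valT ∧
       toGeneralModel.opNotFreeIn (toGeneralModel.vE n α) (embE ⟨γ, C⟩) = some valT)
  nfi_quot : ∀ (n : ℕ) (α : Typ) {γ : Typ} (A : Wff γ),
    toGeneralModel.opNotFreeIn (toGeneralModel.vE n α) (embE ⟨Typ.eps, Wff.quot A⟩) = some valT
  nfi_nonvar : ∀ (x y : D Typ.eps), (∀ (n : ℕ) (α : Typ), x ≠ toGeneralModel.vE n α) →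
    toGeneralModel.opNotFreeIn x y = some valT
  /-- Spec 8: cleanse. -/
  cle_var : ∀ (n : ℕ) (α : Typ),
    toGeneralModel.opCleanse (toGeneralModel.vE n α) = some (toGeneralModel.vE n α)
  cle_con : ∀ (m : ℕ) (β : Typ),
    toGeneralModel.opCleanse (embE ⟨β, Wff.con m β⟩) = some (embE ⟨β, Wff.con m β⟩)
  cle_app : ∀ {γ δ : Typ} (A : Wff (Typ.fn γ δ)) (B : Wff δ),
    toGeneralModel.opCleanse (embE ⟨γ, Wff.app A B⟩) =
      (toGeneralModel.opCleanse (embE ⟨Typ.fn γ δ, A⟩)).bind fun a =>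
        (toGeneralModel.opCleanse (embE ⟨δ, B⟩)).bind fun b =>
          toGeneralModel.opApp a b
  cle_abs : ∀ {γ : Typ} (n : ℕ) (β : Typ) (B : Wff γ),
    toGeneralModel.opCleanse (embE ⟨Typ.fn γ β, Wff.abs n β B⟩) =
      (toGeneralModel.opCleanse (embE ⟨γ, B⟩)).bind fun b =>
        toGeneralModel.opAbs (toGeneralModel.vE n β) b
  cle_cond : ∀ {γ : Typ} (A : Wff Typ.o) (B C : Wff γ),
    toGeneralModel.opCleanse (embE ⟨γ, Wff.cond A B C⟩) =
      (toGeneralModel.opCleanse (embE ⟨Typ.o, A⟩)).bind fun a =>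
        (toGeneralModel.opCleanse (embE ⟨γ, B⟩)).bind fun b =>
          (toGeneralModel.opCleanse (embE ⟨γ, C⟩)).bind fun c =>
            toGeneralModel.opCond a b c
  cle_quot : ∀ {γ : Typ} (A : Wff γ),
    toGeneralModel.opCleanse (embE ⟨Typ.eps, Wff.quot A⟩) = some (embE ⟨Typ.eps, Wff.quot A⟩)
  /-- Spec 9: sub. -/
  sub_var_same : ∀ {α : Typ} (A : Wff α) (n : ℕ),
    toGeneralModel.opSub (embE ⟨α, A⟩) (toGeneralModel.vE n α) (toGeneralModel.vE n α) =
      toGeneralModel.opCleanse (embE ⟨α, A⟩)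
  sub_var_ne : ∀ {α : Typ} (A : Wff α) (n m : ℕ) (β : Typ), (n, α) ≠ (m, β) →
    toGeneralModel.opSub (embE ⟨α, A⟩) (toGeneralModel.vE n α) (toGeneralModel.vE m β) =
      some (toGeneralModel.vE m β)
  sub_con : ∀ {α : Typ} (A : Wff α) (n m : ℕ) (β : Typ),
    toGeneralModel.opSub (embE ⟨α, A⟩) (toGeneralModel.vE n α) (embE ⟨β, Wff.con m β⟩) =
      some (embE ⟨β, Wff.con m β⟩)
  sub_app : ∀ {α : Typ} (A : Wff α) (n : ℕ) {γ δ : Typ} (B : Wff (Typ.fn γ δ)) (C : Wff δ),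
    toGeneralModel.opSub (embE ⟨α, A⟩) (toGeneralModel.vE n α) (embE ⟨γ, Wff.app B C⟩) =
      (toGeneralModel.opSub (embE ⟨α, A⟩) (toGeneralModel.vE n α)
          (embE ⟨Typ.fn γ δ, B⟩)).bind fun b =>
        (toGeneralModel.opSub (embE ⟨α, A⟩) (toGeneralModel.vE n α)
            (embE ⟨δ, C⟩)).bind fun c =>
          toGeneralModel.opApp b c
  sub_abs_same : ∀ {α γ : Typ} (A : Wff α) (n : ℕ) (B : Wff γ),
    toGeneralModel.opSub (embE ⟨α, A⟩) (toGeneralModel.vE n α)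
        (embE ⟨Typ.fn γ α, Wff.abs n α B⟩) =
      (toGeneralModel.opCleanse (embE ⟨γ, B⟩)).bind fun b =>
        toGeneralModel.opAbs (toGeneralModel.vE n α) b
  sub_abs_ne_ok : ∀ {α γ : Typ} (A : Wff α) (n m : ℕ) (β : Typ) (B : Wff γ),
    (n, α) ≠ (m, β) →
    (toGeneralModel.opNotFreeIn (toGeneralModel.vE n α) (embE ⟨γ, B⟩) = some valT ∨
     toGeneralModel.opNotFreeIn (toGeneralModel.vE m β) (embE ⟨α, A⟩) = some valT) →
    toGeneralModel.opSub (embE ⟨α, A⟩) (toGeneralModel.vE n α)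
        (embE ⟨Typ.fn γ β, Wff.abs m β B⟩) =
      (toGeneralModel.opSub (embE ⟨α, A⟩) (toGeneralModel.vE n α) (embE ⟨γ, B⟩)).bind fun b =>
        toGeneralModel.opAbs (toGeneralModel.vE m β) b
  sub_abs_ne_none : ∀ {α γ : Typ} (A : Wff α) (n m : ℕ) (β : Typ) (B : Wff γ),
    (n, α) ≠ (m, β) →
    toGeneralModel.opNotFreeIn (toGeneralModel.vE n α) (embE ⟨γ, B⟩) = some valF →
    toGeneralModel.opNotFreeIn (toGeneralModel.vE m β) (embE ⟨α, A⟩) = some valF →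
    toGeneralModel.opSub (embE ⟨α, A⟩) (toGeneralModel.vE n α)
        (embE ⟨Typ.fn γ β, Wff.abs m β B⟩) = none
  sub_cond : ∀ {α : Typ} (A : Wff α) (n : ℕ) {γ : Typ} (B : Wff Typ.o) (C D' : Wff γ),
    toGeneralModel.opSub (embE ⟨α, A⟩) (toGeneralModel.vE n α) (embE ⟨γ, Wff.cond B C D'⟩) =
      (toGeneralModel.opSub (embE ⟨α, A⟩) (toGeneralModel.vE n α)
          (embE ⟨Typ.o, B⟩)).bind fun b =>
        (toGeneralModel.opSub (embE ⟨α, A⟩) (toGeneralModel.vE n α)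
            (embE ⟨γ, C⟩)).bind fun c =>
          (toGeneralModel.opSub (embE ⟨α, A⟩) (toGeneralModel.vE n α)
              (embE ⟨γ, D'⟩)).bind fun d =>
            toGeneralModel.opCond b c d
  sub_quot : ∀ {α γ : Typ} (A : Wff α) (n : ℕ) (C : Wff γ),
    toGeneralModel.opSub (embE ⟨α, A⟩) (toGeneralModel.vE n α) (embE ⟨Typ.eps, Wff.quot C⟩) =
      some (embE ⟨Typ.eps, Wff.quot C⟩)

/-- In a normal general model, if app applied to constructions
x and y is defined, then x and y are both standard constructions if and only
if the resulting value is a standard construction. -/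
theorem stmt10 (M : NormalModel) (x y z : M.D Typ.eps)
    (h : M.toGeneralModel.opApp x y = some z) :
    ((∃ A : Σ α : Typ, Wff α, x = M.embE A) ∧ (∃ B : Σ α : Typ, Wff α, y = M.embE B)) ↔
      ∃ C : Σ α : Typ, Wff α, z = M.embE C := by
  constructor
  · rintro ⟨⟨⟨γ, A⟩, rfl⟩, ⟨⟨δ, B⟩, rfl⟩⟩
    by_cases h' : ∃ α : Typ, γ = Typ.fn α δ
    · rcases h' with ⟨α, rfl⟩
      have := M.app_std A B
      rw [h] at this
      exact ⟨⟨α, Wff.app A B⟩, Option.some_injective _ this⟩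
    · push_neg at h'
      rw [M.app_mismatch A B h'] at h
      exact absurd h (by simp)
  · rintro ⟨⟨γ, C⟩, rfl⟩
    obtain ⟨β, A, B, _, hx, hy⟩ := M.app_inv x y C h
    exact ⟨⟨⟨_, A⟩, hx⟩, ⟨⟨_, B⟩, hy⟩⟩
end

section
/- In every normal general model, for every evaluation-free wff A, the quotation map applied to A followed by the model's evaluation recovers A's value: V_φ(⟦[q A]⟧_α) ≃ V_φ(A) for all assignments φ (the law of disquotation for evaluation-free wffs). -/
/-- The law of disquotation for evaluation-free wffs: in every
normal general model, the evaluation of the quotation of an evaluation-free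
wff A has the same value (or is likewise undefined) as A itself:
V_φ(⟦[q A]⟧_α) ≃ V_φ(A). -/
theorem stmt12 (M : GeneralModel) {α : Typ} (A : Wff α) (hA : evalFree A)
    (φ : Assign M.D) (n : ℕ) :
    M.V φ (Wff.eval (Wff.quot A) n α) = M.V φ A := by
  have hq := M.V_quot φ A
  by_cases hs : (M.V φ A).isSome
  · exact M.V_eval_some φ _ n A hA hq hs
  · have hnone : M.V φ A = none := by
      cases h : M.V φ A with
      | none => rfl
      | some v => rw [h] at hs; simp at hs
    have hα : α ≠ Typ.o := by
      intro h; subst h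
      exact hs (M.V_o_total φ A)
    have hne : ¬ (∃ B : Wff α, evalFree B ∧ M.V φ (Wff.quot A) = some (M.embE ⟨α, B⟩) ∧ (M.V φ B).isSome) := by
      rintro ⟨B, hB, hVB, hBs⟩
      rw [hq] at hVB
      have : (⟨α, A⟩ : Σ β, Wff β) = ⟨α, B⟩ := M.embE_inj (Option.some.inj hVB)
      have hAB : A = B := by
        have := Sigma.mk.inj_iff.mp this
        exact eq_of_heq this.2
      rw [← hAB] at hBs
      exact hs hBs
    rw [M.V_eval_none φ _ n hα hne, hnone]
end

section
/- Alpha-conversion fails for non-evaluation-free wffs: there exist distinct variables x_ε and y_ε such that the wffs λx_ε ⟦x_ε⟧_⟨εε⟩ and λy_ε ⟦y_ε⟧_⟨εε⟩ are not logically equivalent, i.e., there is a normal general model M and assignment φ with V_φ(λx_ε ⟦x_ε⟧_⟨εε⟩) ≠ V_φ(λy_ε ⟦y_ε⟧_⟨εε⟩). -/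
/-! ### An explicit normal general model -/

open scoped Classical

/-- The domains of the explicit model. -/
def Dom : Typ → Type
  | Typ.iota => Unit
  | Typ.o => Bool
  | Typ.eps => Σ α : Typ, Wff α
  | Typ.fn α β => Dom β → Option (Dom α)
  | Typ.prod α β => Dom α × Dom β

attribute [reducible] Dom

/-- A default element of each domain. -/
def defaultD : ∀ α : Typ, Dom α
  | Typ.iota => ()
  | Typ.o => false
  | Typ.eps => ⟨Typ.o, Wff.con 0 Typ.o⟩
  | Typ.fn _ _ => fun _ => none
  | Typ.prod α β => (defaultD α, defaultD β)

/-- Application in the model: total into `o` (default `false`), partial elsewhere. -/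
def appDom : ∀ {α β : Typ}, Dom (Typ.fn α β) → Dom β → Option (Dom α)
  | Typ.o, _, f, b => some ((f b).getD false)
  | Typ.iota, _, f, b => f b
  | Typ.eps, _, f, b => f b
  | Typ.fn _ _, _, f, b => f b
  | Typ.prod _ _, _, f, b => f b

theorem appDom_ne_o {α β : Typ} (h : α ≠ Typ.o) (f : Dom (Typ.fn α β)) (b : Dom β) :
    appDom f b = f b := by
  cases α <;> first | rfl | exact absurd rfl h

theorem appDom_o {β : Typ} (f : Dom (Typ.fn Typ.o β)) (b : Dom β) :
    appDom f b = some ((f b).getD false) := rfl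

/-- Syntactic application operation on constructions. -/
def opAppS : (Σ α : Typ, Wff α) → (Σ α : Typ, Wff α) → Option (Σ α : Typ, Wff α)
  | ⟨Typ.fn α β, A⟩, ⟨δ, B⟩ => if h : δ = β then some ⟨α, Wff.app A (h ▸ B)⟩ else none
  | _, _ => none

def opAbsS : (Σ α : Typ, Wff α) → (Σ α : Typ, Wff α) → Option (Σ α : Typ, Wff α)
  | ⟨_, Wff.var n β⟩, ⟨δ, B⟩ => some ⟨Typ.fn δ β, Wff.abs n β B⟩
  | _, _ => none

def opCondS : (Σ α : Typ, Wff α) → (Σ α : Typ, Wff α) → (Σ α : Typ, Wff α) →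
    Option (Σ α : Typ, Wff α)
  | ⟨Typ.o, A⟩, ⟨δ, B⟩, ⟨δ', C⟩ =>
      if h : δ' = δ then some ⟨δ, Wff.cond A B (h ▸ C)⟩ else none
  | _, _, _ => none

def opQuotS : (Σ α : Typ, Wff α) → Option (Σ α : Typ, Wff α)
  | ⟨_, A⟩ => some ⟨Typ.eps, Wff.quot A⟩

def opEvalS : (Σ α : Typ, Wff α) → (Σ α : Typ, Wff α) → Option (Σ α : Typ, Wff α)
  | ⟨Typ.eps, A⟩, ⟨_, Wff.var n δ⟩ => some ⟨δ, Wff.eval A n δ⟩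
  | _, _ => none

/-- Boolean free-variable test. -/
def freeB (n : ℕ) (α : Typ) : ∀ {γ : Typ}, Wff γ → Bool
  | _, Wff.var m β => decide (n = m ∧ α = β)
  | _, Wff.con _ _ => false
  | _, Wff.app A B => freeB n α A || freeB n α B
  | _, Wff.abs m β B => !(decide (n = m ∧ α = β)) && freeB n α B
  | _, Wff.cond A B C => freeB n α A || freeB n α B || freeB n α C
  | _, Wff.quot _ => false
  | _, Wff.eval A _ _ => freeB n α A

/-- Boolean not-free-in predicate on constructions. -/
def nfiS : (Σ α : Typ, Wff α) → (Σ α : Typ, Wff α) → Bool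
  | ⟨_, Wff.var n β⟩, ⟨_, B⟩ => !(freeB n β B)
  | _, _ => true

/-- The cleanse operation on constructions. -/
def cleS : ∀ {γ : Typ}, Wff γ → Option (Σ α : Typ, Wff α)
  | _, Wff.var m δ => some ⟨δ, Wff.var m δ⟩
  | _, Wff.con m δ => some ⟨δ, Wff.con m δ⟩
  | _, Wff.app A B =>
      (cleS A).bind fun a => (cleS B).bind fun b => opAppS a b
  | _, Wff.abs m δ B =>
      (cleS B).bind fun b => opAbsS ⟨δ, Wff.var m δ⟩ b
  | _, Wff.cond A B C =>
      (cleS A).bind fun a => (cleS B).bind fun b => (cleS C).bind fun c => opCondS a b c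
  | _, Wff.quot C => some ⟨Typ.eps, Wff.quot C⟩
  | _, Wff.eval _ _ _ => none

/-- The substitution operation on constructions (replacement `x`, variable `(n, β)`). -/
def subAuxS (x : Σ α : Typ, Wff α) (n : ℕ) (β : Typ) :
    ∀ {γ : Typ}, Wff γ → Option (Σ α : Typ, Wff α)
  | _, Wff.var m δ =>
      if (n, β) = (m, δ) then cleS x.2 else some ⟨δ, Wff.var m δ⟩
  | _, Wff.con m δ => some ⟨δ, Wff.con m δ⟩
  | _, Wff.app A B =>
      (subAuxS x n β A).bind fun a => (subAuxS x n β B).bind fun b => opAppS a b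
  | _, Wff.abs m δ B =>
      if (n, β) = (m, δ) then (cleS B).bind fun b => opAbsS ⟨δ, Wff.var m δ⟩ b
      else if nfiS ⟨β, Wff.var n β⟩ ⟨_, B⟩ || nfiS ⟨δ, Wff.var m δ⟩ x then
        (subAuxS x n β B).bind fun b => opAbsS ⟨δ, Wff.var m δ⟩ b
      else none
  | _, Wff.cond A B C =>
      (subAuxS x n β A).bind fun a => (subAuxS x n β B).bind fun b =>
        (subAuxS x n β C).bind fun c => opCondS a b c
  | _, Wff.quot C => some ⟨Typ.eps, Wff.quot C⟩
  | _, Wff.eval _ _ _ => none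

def subS (x y : Σ α : Typ, Wff α) : (Σ α : Typ, Wff α) → Option (Σ α : Typ, Wff α)
  | z => match y with
    | ⟨_, Wff.var n β⟩ => subAuxS x n β z.2
    | _ => none

/-- Interpretation of the equality constants. -/
noncomputable def qS (α α' : Typ) : Dom (Typ.fn (Typ.fn Typ.o α) α') :=
  fun x => some (fun y => some (if h : α' = α then decide ((h ▸ x) = y) else false))

/-- Interpretation of the primitive constants. -/
noncomputable def Jv : ∀ α : Typ, ℕ → Dom α
  | Typ.fn (Typ.fn Typ.eps Typ.eps) Typ.eps, 0 => fun x => some fun y => opAppS x y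
  | Typ.fn (Typ.fn Typ.eps Typ.eps) Typ.eps, 1 => fun x => some fun y => opAbsS x y
  | Typ.fn (Typ.fn (Typ.fn Typ.eps Typ.eps) Typ.eps) Typ.eps, 2 =>
      fun x => some fun y => some fun z => opCondS x y z
  | Typ.fn Typ.eps Typ.eps, 3 => fun x => opQuotS x
  | Typ.fn (Typ.fn Typ.eps Typ.eps) Typ.eps, 4 => fun x => some fun y => opEvalS x y
  | Typ.fn (Typ.fn (Typ.fn Typ.eps Typ.eps) Typ.eps) Typ.eps, 5 =>
      fun x => some fun y => some fun z => subS x y z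
  | Typ.fn (Typ.fn Typ.o Typ.eps) Typ.eps, 6 => fun x => some fun y => some (nfiS x y)
  | Typ.fn Typ.eps Typ.eps, 7 => fun x => cleS x.2
  | Typ.fn (Typ.fn Typ.o α) α', 8 => qS α α'
  | Typ.fn (Typ.prod Typ.eps Typ.eps) Typ.eps, 100 => fun z => some (z, z)
  | α, _ => defaultD α

/-- Default value for failed applications/evaluations, by result type. -/
def fallbackD : ∀ α : Typ, Option (Dom α)
  | Typ.o => some false
  | _ => none

def appRes : ∀ α : Typ, Option (Dom α) → Option (Dom α)
  | Typ.o, r => some (r.getD false)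
  | _, r => r

theorem appRes_ne_o {α : Typ} (h : α ≠ Typ.o) (r : Option (Dom α)) : appRes α r = r := by
  cases α <;> first | rfl | exact absurd rfl h

/-- Valuation of evaluation-free wffs (eval nodes get the fallback value). -/
noncomputable def Vfree : Assign Dom → ∀ {α : Typ}, Wff α → Option (Dom α)
  | φ, _, Wff.var n α => some (φ α n)
  | _, _, Wff.con n α => some (Jv α n)
  | φ, α, Wff.app A B =>
      appRes α ((Vfree φ A).bind fun f => (Vfree φ B).bind fun b => appDom f b)
  | φ, _, Wff.abs n β B => some (fun d => Vfree (Assign.upd φ β n d) B)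
  | φ, _, Wff.cond A B C =>
      match Vfree φ A with
      | some b => if (show Bool from b) then Vfree φ B else Vfree φ C
      | none => none
  | _, _, Wff.quot A => some ⟨_, A⟩
  | _, _, Wff.eval _ _ α => fallbackD α

/-- The full valuation function. -/
noncomputable def Vv : Assign Dom → ∀ {α : Typ}, Wff α → Option (Dom α)
  | φ, _, Wff.var n α => some (φ α n)
  | _, _, Wff.con n α => some (Jv α n)
  | φ, α, Wff.app A B =>
      appRes α ((Vv φ A).bind fun f => (Vv φ B).bind fun b => appDom f b)
  | φ, _, Wff.abs n β B => some (fun d => Vv (Assign.upd φ β n d) B)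
  | φ, _, Wff.cond A B C =>
      match Vv φ A with
      | some b => if (show Bool from b) then Vv φ B else Vv φ C
      | none => none
  | _, _, Wff.quot A => some ⟨_, A⟩
  | φ, _, Wff.eval A _ α =>
      match Vv φ A with
      | none => fallbackD α
      | some ⟨γ, B⟩ =>
          if h : γ = α then
            if evalFree (h ▸ B) ∧ (Vfree φ (h ▸ B)).isSome then Vfree φ (h ▸ B)
            else fallbackD α
          else fallbackD α

theorem Vv_eq_Vfree : ∀ {α : Typ} (A : Wff α), evalFree A → ∀ φ, Vv φ A = Vfree φ A
  | _, Wff.var n α, _, φ => rfl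
  | _, Wff.con n α, _, φ => rfl
  | _, Wff.app A B, h, φ => by
      rw [Vv, Vfree, Vv_eq_Vfree A h.1 φ, Vv_eq_Vfree B h.2 φ]
  | _, Wff.abs n β B, h, φ => by
      rw [Vv, Vfree]
      exact congrArg some (funext fun d => Vv_eq_Vfree B h _)
  | _, Wff.cond A B C, h, φ => by
      rw [Vv, Vfree, Vv_eq_Vfree A h.1 φ, Vv_eq_Vfree B h.2.1 φ, Vv_eq_Vfree C h.2.2 φ]
  | _, Wff.quot A, _, φ => rfl
  | _, Wff.eval _ _ _, h, φ => absurd h not_false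

theorem Vo_total : ∀ {α : Typ} (A : Wff α), α = Typ.o → ∀ φ, (Vv φ A).isSome
  | _, Wff.var n α, _, φ => rfl
  | _, Wff.con n α, _, φ => rfl
  | _, Wff.app A B, h, φ => by subst h; rw [Vv]; rfl
  | _, Wff.cond A B C, h, φ => by
      rw [Vv]
      have hA := Vo_total A rfl φ
      obtain ⟨b, hb⟩ := Option.isSome_iff_exists.1 hA
      rw [hb]
      cases b
      · simpa using Vo_total C h φ
      · simpa using Vo_total B h φ
  | _, Wff.eval A _ α, h, φ => by
      subst h
      rw [Vv]
      rcases hA : Vv φ A with _ | ⟨γ, B⟩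
      · rfl
      · dsimp only
        split
        · split
          · next heq hc => exact hc.2
          · rfl
        · rfl

theorem Vv_var (φ : Assign Dom) (n : ℕ) (α : Typ) : Vv φ (Wff.var n α) = some (φ α n) := by
  rw [Vv]

theorem Vv_con (φ : Assign Dom) (n : ℕ) (α : Typ) : Vv φ (Wff.con n α) = some (Jv α n) := by
  rw [Vv]

theorem Vv_quot (φ : Assign Dom) {α : Typ} (A : Wff α) :
    Vv φ (Wff.quot A) = some ⟨α, A⟩ := by rw [Vv]

theorem Vv_app (φ : Assign Dom) {α β : Typ} (A : Wff (Typ.fn α β)) (B : Wff β) :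
    Vv φ (Wff.app A B) =
      appRes α ((Vv φ A).bind fun f => (Vv φ B).bind fun b => appDom f b) := by
  rw [Vv]

theorem Vv_abs (φ : Assign Dom) {α : Typ} (n : ℕ) (β : Typ) (B : Wff α) :
    Vv φ (Wff.abs n β B) = some (fun d => Vv (Assign.upd φ β n d) B) := by rw [Vv]

theorem Vv_cond_T (φ : Assign Dom) {α : Typ} (A : Wff Typ.o) (B C : Wff α)
    (h : Vv φ A = some true) : Vv φ (Wff.cond A B C) = Vv φ B := by
  rw [Vv, h]
  exact if_pos rfl

theorem Vv_cond_F (φ : Assign Dom) {α : Typ} (A : Wff Typ.o) (B C : Wff α)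
    (h : Vv φ A = some false) : Vv φ (Wff.cond A B C) = Vv φ C := by
  rw [Vv, h]
  exact if_neg (by simp)

theorem Vv_eval_none (φ : Assign Dom) (A : Wff Typ.eps) (n : ℕ) (α : Typ)
    (h : Vv φ A = none) : Vv φ (Wff.eval A n α) = fallbackD α := by
  rw [Vv, h]

theorem Vv_eval_self (φ : Assign Dom) (A : Wff Typ.eps) (n : ℕ) {α : Typ} (B : Wff α)
    (h : Vv φ A = some ⟨α, B⟩) :
    Vv φ (Wff.eval A n α) =
      if evalFree B ∧ (Vfree φ B).isSome then Vfree φ B else fallbackD α := by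
  rw [Vv, h]
  exact dif_pos rfl

theorem Vv_eval_mismatch (φ : Assign Dom) (A : Wff Typ.eps) (n : ℕ) {α γ : Typ}
    (B : Wff γ) (h : Vv φ A = some ⟨γ, B⟩) (hne : γ ≠ α) :
    Vv φ (Wff.eval A n α) = fallbackD α := by
  rw [Vv, h]
  exact dif_neg hne

theorem M0_app_some (φ : Assign Dom) {α β : Typ} (A : Wff (Typ.fn α β)) (B : Wff β)
    (f : Dom (Typ.fn α β)) (b : Dom β) (v : Dom α)
    (hA : Vv φ A = some f) (hB : Vv φ B = some b) (hfb : appDom f b = some v) :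
    Vv φ (Wff.app A B) = some v := by
  rw [Vv_app, hA, hB]
  show appRes α (appDom f b) = some v
  rw [hfb]
  cases α <;> rfl

theorem M0_app_none_o (φ : Assign Dom) {β : Typ} (A : Wff (Typ.fn Typ.o β)) (B : Wff β)
    (h : ((Vv φ A).bind fun f => (Vv φ B).bind fun b => appDom f b) = none) :
    Vv φ (Wff.app A B) = some false := by
  rw [Vv_app, h]
  rfl

theorem M0_app_none (φ : Assign Dom) {α β : Typ} (A : Wff (Typ.fn α β)) (B : Wff β)
    (hα : α ≠ Typ.o)
    (h : ((Vv φ A).bind fun f => (Vv φ B).bind fun b => appDom f b) = none) :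
    Vv φ (Wff.app A B) = none := by
  rw [Vv_app, h, appRes_ne_o hα]

theorem M0_abs (φ : Assign Dom) {α : Typ} (n : ℕ) (β : Typ) (B : Wff α) :
    ∃ f, Vv φ (Wff.abs n β B) = some f ∧
      ∀ d : Dom β, appDom f d = Vv (Assign.upd φ β n d) B := by
  refine ⟨fun d => Vv (Assign.upd φ β n d) B, Vv_abs φ n β B, fun d => ?_⟩
  by_cases hα : α = Typ.o
  · subst hα
    rw [appDom_o]
    obtain ⟨b, hb⟩ := Option.isSome_iff_exists.1 (Vo_total B rfl (Assign.upd φ β n d))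
    rw [hb]; rfl
  · rw [appDom_ne_o hα]

theorem M0_eval_some (φ : Assign Dom) (A : Wff Typ.eps) (n : ℕ) {α : Typ} (B : Wff α)
    (hBf : evalFree B) (hA : Vv φ A = some ⟨α, B⟩) (hBs : (Vv φ B).isSome) :
    Vv φ (Wff.eval A n α) = Vv φ B := by
  rw [Vv_eval_self φ A n B hA]
  rw [Vv_eq_Vfree B hBf φ] at hBs ⊢
  rw [if_pos ⟨hBf, hBs⟩]

theorem M0_eval_none_gen (φ : Assign Dom) (A : Wff Typ.eps) (n : ℕ) {α : Typ}
    (hne : ¬ ∃ B : Wff α, evalFree B ∧ Vv φ A = some ⟨α, B⟩ ∧ (Vv φ B).isSome) :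
    Vv φ (Wff.eval A n α) = fallbackD α := by
  rcases hA : Vv φ A with _ | ⟨γ, B⟩
  · exact Vv_eval_none φ A n α hA
  · by_cases hγ : γ = α
    · subst hγ
      rw [Vv_eval_self φ A n B hA]
      rw [if_neg]
      intro hc
      exact hne ⟨B, hc.1, hA, by rw [Vv_eq_Vfree B hc.1 φ]; exact hc.2⟩
    · exact Vv_eval_mismatch φ A n B hA hγ

theorem Jv_Q (α : Typ) : Jv (tyQ α) 8 = qS α α := by
  show Jv (Typ.fn (Typ.fn Typ.o α) α) 8 = qS α α
  rw [Jv]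

theorem qS_app (α : Typ) (x y : Dom α) :
    ((appDom (qS α α) x).bind fun g => appDom g y) = some (decide (x = y)) := by
  have h1 : appDom (qS α α) x =
      some (fun y => some (if h : α = α then decide ((h ▸ x) = y) else false)) := rfl
  rw [h1, Option.bind_some, appDom_o]
  simp

theorem M0_Q_refl {α : Typ} (x : Dom α) :
    ((appDom (Jv (tyQ α) 8) x).bind fun g => appDom g x) = some true := by
  rw [Jv_Q, qS_app]
  simp

theorem M0_Q_ne {α : Typ} (x y : Dom α) (hxy : x ≠ y) :
    ((appDom (Jv (tyQ α) 8) x).bind fun g => appDom g y) = some false := by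
  rw [Jv_Q, qS_app]
  simp [hxy]

/-- The explicit general model. -/
noncomputable def M0 : GeneralModel where
  D := Dom
  inh α := ⟨defaultD α⟩
  valT := true
  valF := false
  distinctTF := fun h => Bool.noConfusion h
  bool_only x := Bool.eq_false_or_eq_true x
  embE := fun x => x
  embE_inj := fun _ _ h => h
  appD := appDom
  appD_o_total := fun _ _ => rfl
  J := Jv
  V := Vv
  V_var := Vv_var
  V_con := Vv_con
  V_o_total φ A := Vo_total A rfl φ
  V_app_some := M0_app_some
  V_app_none_o := M0_app_none_o
  V_app_none := M0_app_none
  V_abs := M0_abs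
  V_cond_T := Vv_cond_T
  V_cond_F := Vv_cond_F
  V_quot := fun φ {α} A => Vv_quot φ A
  V_eval_some := M0_eval_some
  V_eval_none_o := fun φ A n hne => M0_eval_none_gen φ A n hne
  V_eval_none := fun φ A n {α} hα hne => by
    rw [M0_eval_none_gen φ A n hne]
    cases α <;> first | rfl | exact absurd rfl hα
  V_Q_refl := M0_Q_refl
  V_Q_ne := M0_Q_ne

attribute [reducible] M0

theorem M0_opApp (x y : Σ α : Typ, Wff α) : M0.opApp x y = opAppS x y := rfl
theorem M0_opAbs (x y : Σ α : Typ, Wff α) : M0.opAbs x y = opAbsS x y := rfl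
theorem M0_opCond (x y z : Σ α : Typ, Wff α) : M0.opCond x y z = opCondS x y z := rfl
theorem M0_opQuot (x : Σ α : Typ, Wff α) : M0.opQuot x = opQuotS x := rfl
theorem M0_opEval (x y : Σ α : Typ, Wff α) : M0.opEval x y = opEvalS x y := rfl
theorem M0_opNfi (x y : Σ α : Typ, Wff α) : M0.opNotFreeIn x y = some (nfiS x y) := rfl
theorem M0_opCle {γ : Typ} (A : Wff γ) : M0.opCleanse ⟨γ, A⟩ = cleS A := rfl
theorem M0_opSub (x : Σ α : Typ, Wff α) (n : ℕ) (β : Typ) (z : Σ α : Typ, Wff α) :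
    M0.opSub x ⟨β, Wff.var n β⟩ z = subAuxS x n β z.2 := rfl
theorem M0_vE (n : ℕ) (α : Typ) : M0.vE n α = ⟨α, Wff.var n α⟩ := rfl

theorem opAppS_std {α β : Typ} (A : Wff (Typ.fn α β)) (B : Wff β) :
    opAppS ⟨Typ.fn α β, A⟩ ⟨β, B⟩ = some ⟨α, Wff.app A B⟩ := by
  rw [opAppS, dif_pos rfl]

theorem opCondS_std {α : Typ} (A : Wff Typ.o) (B C : Wff α) :
    opCondS ⟨Typ.o, A⟩ ⟨α, B⟩ ⟨α, C⟩ = some ⟨α, Wff.cond A B C⟩ := by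
  rw [opCondS, dif_pos rfl]

theorem opAppS_mismatch {γ δ : Typ} (A : Wff γ) (B : Wff δ) (h : ∀ α : Typ, γ ≠ Typ.fn α δ) :
    opAppS ⟨γ, A⟩ ⟨δ, B⟩ = none := by
  cases γ with
  | fn a b =>
      rw [opAppS, dif_neg]
      intro hd
      exact h a (by rw [hd])
  | _ => rfl

theorem opAppS_inv (x y : Σ α : Typ, Wff α) {γ : Typ} (C : Wff γ)
    (h : opAppS x y = some ⟨γ, C⟩) :
    ∃ (β : Typ) (A : Wff (Typ.fn γ β)) (B : Wff β),
      C = Wff.app A B ∧ x = ⟨Typ.fn γ β, A⟩ ∧ y = ⟨β, B⟩ := by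
  obtain ⟨γx, A⟩ := x
  obtain ⟨δ, B⟩ := y
  cases γx with
  | fn a b =>
      rw [opAppS] at h
      split at h
      · next hd =>
          subst hd
          obtain ⟨h1, h2⟩ := Sigma.ext_iff.mp (Option.some.inj h)
          dsimp only at h1 h2
          subst h1
          exact ⟨_, A, B, (eq_of_heq h2).symm, rfl, rfl⟩
      · exact absurd h (by simp)
  | iota => exact absurd h (by simp [opAppS])
  | o => exact absurd h (by simp [opAppS])
  | eps => exact absurd h (by simp [opAppS])
  | prod a b => exact absurd h (by simp [opAppS])

theorem nfiS_var {γ : Typ} (n : ℕ) (α : Typ) (B : Wff γ) :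
    nfiS ⟨α, Wff.var n α⟩ ⟨γ, B⟩ = !(freeB n α B) := rfl

theorem pair_ne_iff {n m : ℕ} {α β : Typ} (h : (n, α) ≠ (m, β)) : ¬(n = m ∧ α = β) := by
  rintro ⟨rfl, rfl⟩; exact h rfl

theorem M0_valT : M0.valT = true := rfl
theorem M0_valF : M0.valF = false := rfl
theorem M0_embE (x : Σ α : Typ, Wff α) : M0.embE x = x := rfl
theorem M0_opSub' (x : Σ α : Typ, Wff α) (n : ℕ) (β : Typ) {γ : Typ} (C : Wff γ) :
    M0.opSub x ⟨β, Wff.var n β⟩ ⟨γ, C⟩ = subAuxS x n β C := rfl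

theorem subAuxS_abs (x : Σ α : Typ, Wff α) (n : ℕ) (β : Typ) {γ : Typ} (m : ℕ) (δ : Typ)
    (B : Wff γ) :
    subAuxS x n β (Wff.abs m δ B) =
      if (n, β) = (m, δ) then (cleS B).bind fun b => opAbsS ⟨δ, Wff.var m δ⟩ b
      else if nfiS ⟨β, Wff.var n β⟩ ⟨γ, B⟩ || nfiS ⟨δ, Wff.var m δ⟩ x then
        (subAuxS x n β B).bind fun b => opAbsS ⟨δ, Wff.var m δ⟩ b
      else none := by
  rw [subAuxS]

/-- The explicit normal model. -/
noncomputable def M : NormalModel where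
  toGeneralModel := M0
  app_std := by
    intro α β A B
    rw [M0_opApp]
    exact opAppS_std A B
  app_mismatch := by
    intro γ δ A B h
    rw [M0_opApp]
    exact opAppS_mismatch A B h
  app_inv := by
    intro x y γ C h
    rw [M0_opApp] at h
    exact opAppS_inv x y C h
  abs_std := by intro α n β B; rfl
  cond_std := by
    intro α A B C
    rw [M0_opCond]
    exact opCondS_std A B C
  quot_std := by intro α A; rfl
  eval_std := by intro A n α; rfl
  nfi_total := by intro x y; rw [M0_opNfi]; rfl
  nfi_self := by
    intro n α
    simp only [M0_opNfi, M0_vE, M0_valF]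
    simp [nfiS, freeB]
  nfi_var_ne := by
    intro n m α β h
    simp only [M0_opNfi, M0_vE, M0_valT]
    simp [nfiS, freeB, pair_ne_iff h]
  nfi_con := by
    intro n α m β
    simp only [M0_opNfi, M0_vE, M0_embE, M0_valT]
    simp [nfiS, freeB]
  nfi_app := by
    intro n α γ δ A B
    simp only [M0_opNfi, M0_vE, M0_embE, M0_valT]
    simp [nfiS_var, freeB]
  nfi_abs_same := by
    intro n α γ B
    simp only [M0_opNfi, M0_vE, M0_embE, M0_valT]
    simp [nfiS_var, freeB]
  nfi_abs_ne := by
    intro n m α β γ B h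
    simp only [M0_opNfi, M0_vE, M0_embE, M0_valT]
    simp [nfiS_var, freeB, pair_ne_iff h]
  nfi_cond := by
    intro n α γ A B C
    simp only [M0_opNfi, M0_vE, M0_embE, M0_valT]
    simp [nfiS_var, freeB, and_assoc]
  nfi_quot := by
    intro n α γ A
    simp only [M0_opNfi, M0_vE, M0_embE, M0_valT]
    simp [nfiS_var, freeB]
  nfi_nonvar := by
    intro x y h
    rw [M0_opNfi, M0_valT]
    obtain ⟨γ, A⟩ := x
    cases A with
    | var k δ => exact absurd rfl (h k γ)
    | _ => rfl
  cle_var := by intro n α; rfl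
  cle_con := by intro m β; rfl
  cle_app := by
    intro γ δ A B
    simp only [M0_embE, M0_opCle]
    conv_lhs => rw [cleS]
    rfl
  cle_abs := by
    intro γ n β B
    simp only [M0_embE, M0_opCle]
    conv_lhs => rw [cleS]
    rfl
  cle_cond := by
    intro γ A B C
    simp only [M0_embE, M0_opCle]
    conv_lhs => rw [cleS]
    rfl
  cle_quot := by intro γ A; rfl
  sub_var_same := by
    intro α A n
    simp only [M0_embE, M0_vE, M0_opSub', M0_opCle]
    rw [subAuxS, if_pos rfl]
  sub_var_ne := by
    intro α A n m β h
    simp only [M0_embE, M0_vE, M0_opSub']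
    rw [subAuxS, if_neg h]
  sub_con := by intro α A n m β; rfl
  sub_app := by
    intro α A n γ δ B C
    simp only [M0_embE, M0_vE, M0_opSub']
    conv_lhs => rw [subAuxS]
    rfl
  sub_abs_same := by
    intro α γ A n B
    simp only [M0_embE, M0_vE, M0_opSub', M0_opCle]
    rw [subAuxS_abs, if_pos rfl]
    rfl
  sub_abs_ne_ok := by
    intro α γ A n m β B hne hok
    simp only [M0_embE, M0_vE, M0_opSub', M0_opNfi, M0_valT] at *
    have hb : (nfiS ⟨α, Wff.var n α⟩ ⟨γ, B⟩ || nfiS ⟨β, Wff.var m β⟩ ⟨α, A⟩) = true := by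
      rcases hok with h | h
      · rw [Option.some.inj h]; simp
      · rw [Option.some.inj h]; simp
    rw [subAuxS_abs, if_neg hne, if_pos hb]
    rfl
  sub_abs_ne_none := by
    intro α γ A n m β B hne h1 h2
    simp only [M0_embE, M0_vE, M0_opSub', M0_opNfi, M0_valF] at *
    rw [subAuxS_abs, if_neg hne, if_neg]
    rw [Option.some.inj h1, Option.some.inj h2]
    simp
  sub_cond := by
    intro α A n γ B C D'
    simp only [M0_embE, M0_vE, M0_opSub']
    conv_lhs => rw [subAuxS]
    rfl
  sub_quot := by intro α γ A n C; rfl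

namespace Stmt13

noncomputable def φ0 : Assign Dom := fun α _ => defaultD α

def P : Typ := Typ.prod Typ.eps Typ.eps
def τ : Typ := Typ.fn P Typ.eps

/-- The witness wff of type ⟨εε⟩ with `x_ε` free: `pair x_ε` via constant 100. -/
def Bw : Wff P := Wff.app (Wff.con 100 τ) (Wff.var 0 Typ.eps)

def d : Dom Typ.eps := ⟨P, Bw⟩

theorem hBfree : evalFree Bw := ⟨trivial, trivial⟩

theorem hVfreeB (ψ : Assign Dom) : Vfree ψ Bw = some (ψ Typ.eps 0, ψ Typ.eps 0) := by
  simp only [Bw, Vfree]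
  rfl

theorem upd_self (ψ : Assign Dom) (n : ℕ) (x : Dom Typ.eps) :
    Assign.upd ψ Typ.eps n x Typ.eps n = x := by
  rw [Assign.upd]
  simp

theorem eval_value (ψ : Assign Dom) (n k : ℕ) (hψ : ψ Typ.eps n = d) :
    Vv ψ (Wff.eval (Wff.var n Typ.eps) k P) = some (ψ Typ.eps 0, ψ Typ.eps 0) := by
  have hA : Vv ψ (Wff.var n Typ.eps) = some ⟨P, Bw⟩ := by rw [Vv_var, hψ]; rfl
  rw [Vv_eval_self ψ _ k Bw hA, if_pos ⟨hBfree, by rw [hVfreeB]; rfl⟩, hVfreeB]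

theorem main :
    Vv φ0 (Wff.abs 0 Typ.eps (Wff.eval (Wff.var 0 Typ.eps) 0 P)) ≠
    Vv φ0 (Wff.abs 1 Typ.eps (Wff.eval (Wff.var 1 Typ.eps) 0 P)) := by
  intro h
  rw [Vv_abs, Vv_abs] at h
  have h2 := congrFun (Option.some.inj h) d
  rw [eval_value _ 0 0 (upd_self φ0 0 d), eval_value _ 1 0 (upd_self φ0 1 d)] at h2
  have h3 : Assign.upd φ0 Typ.eps 0 d Typ.eps 0 = d := upd_self φ0 0 d
  have h4 : Assign.upd φ0 Typ.eps 1 d Typ.eps 0 = defaultD Typ.eps := by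
    rw [Assign.upd]
    simp
    rfl
  rw [h3, h4] at h2
  have h5 : d = defaultD Typ.eps := congrArg Prod.fst (Option.some.inj h2)
  have h6 := congrArg Sigma.fst h5
  exact Typ.noConfusion h6

end Stmt13
/-- Alpha-conversion fails for non-evaluation-free wffs: there
are a normal general model M, an assignment φ, and distinct variables x_ε, y_ε
such that λx_ε ⟦x_ε⟧_⟨εε⟩ and λy_ε ⟦y_ε⟧_⟨εε⟩ have different values. -/
theorem stmt13 :
    ∃ (M : NormalModel) (φ : Assign M.D) (n m k : ℕ), n ≠ m ∧
      M.V φ (Wff.abs n Typ.eps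
          (Wff.eval (Wff.var n Typ.eps) k (Typ.prod Typ.eps Typ.eps))) ≠
      M.V φ (Wff.abs m Typ.eps
          (Wff.eval (Wff.var m Typ.eps) k (Typ.prod Typ.eps Typ.eps))) := by
  exact ⟨M, Stmt13.φ0, 0, 1, 0, by decide, Stmt13.main⟩
end

section
/- In every normal general model M, if sub ⌜A_α⌝ ⌜x_α⌝ ⌜B_β⌝ is defined and not-free-in ⌜x_α⌝ ⌜B_β⌝ holds in M, then sub ⌜A_α⌝ ⌜x_α⌝ ⌜B_β⌝ = ⌜B_β⌝ holds in M, for evaluation-free A_α and B_β (substitution for a non-occurring variable is the identity). -/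
/-- Cleanse is the identity on evaluation-free constructions. -/
theorem cleanse_id (M : NormalModel) : ∀ {γ : Typ} (C : Wff γ), evalFree C →
    M.toGeneralModel.opCleanse (M.embE ⟨γ, C⟩) = some (M.embE ⟨γ, C⟩) := by
  intro γ C
  induction C with
  | var m δ => intro _; exact M.cle_var m δ
  | con m δ => intro _; exact M.cle_con m δ
  | app A B ihA ihB =>
      intro h
      rw [M.cle_app A B, ihA h.1, ihB h.2]
      exact M.app_std A B
  | abs m δ B ihB =>
      intro h
      rw [M.cle_abs m δ B, ihB h]
      exact M.abs_std m δ B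
  | cond A B C ihA ihB ihC =>
      intro h
      rw [M.cle_cond A B C, ihA h.1, ihB h.2.1, ihC h.2.2]
      exact M.cond_std A B C
  | quot A _ => intro _; exact M.cle_quot A
  | eval A m δ _ => intro h; exact absurd h not_false

/-- In every normal general model M, for evaluation-free A_α and
B_β, if sub ⌜A_α⌝ ⌜x_α⌝ ⌜B_β⌝ is defined and not-free-in ⌜x_α⌝ ⌜B_β⌝ holds in
M, then sub ⌜A_α⌝ ⌜x_α⌝ ⌜B_β⌝ = ⌜B_β⌝ holds in M: substitution for a
non-occurring variable is the identity. -/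
theorem stmt17 (M : NormalModel) {α β : Typ} (A : Wff α) (n : ℕ) (B : Wff β)
    (hA : evalFree A) (hB : evalFree B)
    (hdef : (M.toGeneralModel.opSub (M.embE ⟨α, A⟩) (M.toGeneralModel.vE n α)
        (M.embE ⟨β, B⟩)).isSome)
    (hnf : M.toGeneralModel.opNotFreeIn (M.toGeneralModel.vE n α) (M.embE ⟨β, B⟩) =
        some M.valT) :
    M.toGeneralModel.opSub (M.embE ⟨α, A⟩) (M.toGeneralModel.vE n α) (M.embE ⟨β, B⟩) =
      some (M.embE ⟨β, B⟩) := by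
  clear hA
  revert hB hdef hnf
  induction B with
  | var m δ =>
      intro _ _ hnf
      by_cases h : (n, α) = (m, δ)
      · obtain ⟨h1, h2⟩ := Prod.mk.injEq .. ▸ h
        subst h2; subst h1
        have hs : M.toGeneralModel.opNotFreeIn (M.toGeneralModel.vE n α)
            (M.embE ⟨α, Wff.var n α⟩) = some M.valF := M.nfi_self n α
        rw [hs] at hnf
        exact absurd (Option.some.inj hnf) M.distinctTF.symm
      · exact M.sub_var_ne A n m δ h
  | con m δ => intro _ _ _; exact M.sub_con A n m δ
  | app B C ihB ihC =>
      intro hB hdef hnf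
      rw [M.sub_app A n B C] at hdef ⊢
      obtain ⟨h1, h2⟩ := (M.nfi_app n α B C).mp hnf
      have hdB : (M.toGeneralModel.opSub (M.embE ⟨α, A⟩) (M.toGeneralModel.vE n α)
          (M.embE ⟨_, B⟩)).isSome := by
        rcases Option.isSome_iff_exists.mp hdef with ⟨v, hv⟩
        rcases Option.bind_eq_some_iff.mp hv with ⟨b, hb, _⟩
        simp [hb]
      have eB := ihB hB.1 hdB h1
      rw [eB] at hdef ⊢
      simp only [Option.bind_some] at hdef ⊢
      have hdC : (M.toGeneralModel.opSub (M.embE ⟨α, A⟩) (M.toGeneralModel.vE n α)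
          (M.embE ⟨_, C⟩)).isSome := by
        rcases Option.isSome_iff_exists.mp hdef with ⟨v, hv⟩
        rcases Option.bind_eq_some_iff.mp hv with ⟨c, hc, _⟩
        simp [hc]
      rw [ihC hB.2 hdC h2]
      simp only [Option.bind_some]
      exact M.app_std B C
  | abs m δ B ihB =>
      intro hB hdef hnf
      by_cases h : (n, α) = (m, δ)
      · obtain ⟨h1, h2⟩ := Prod.mk.injEq .. ▸ h
        subst h2; subst h1
        rw [M.sub_abs_same A n B, cleanse_id M B hB]
        simp only [Option.bind_some]
        exact M.abs_std n α B
      · have h1 := (M.nfi_abs_ne n m α δ B h).mp hnf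
        rw [M.sub_abs_ne_ok A n m δ B h (Or.inl h1)] at hdef ⊢
        have hdB : (M.toGeneralModel.opSub (M.embE ⟨α, A⟩) (M.toGeneralModel.vE n α)
            (M.embE ⟨_, B⟩)).isSome := by
          rcases Option.isSome_iff_exists.mp hdef with ⟨v, hv⟩
          rcases Option.bind_eq_some_iff.mp hv with ⟨b, hb, _⟩
          simp [hb]
        rw [ihB hB hdB h1]
        simp only [Option.bind_some]
        exact M.abs_std m δ B
  | cond B C D' ihB ihC ihD =>
      intro hB hdef hnf
      rw [M.sub_cond A n B C D'] at hdef ⊢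
      obtain ⟨h1, h2, h3⟩ := (M.nfi_cond n α B C D').mp hnf
      have hdB : (M.toGeneralModel.opSub (M.embE ⟨α, A⟩) (M.toGeneralModel.vE n α)
          (M.embE ⟨_, B⟩)).isSome := by
        rcases Option.isSome_iff_exists.mp hdef with ⟨v, hv⟩
        rcases Option.bind_eq_some_iff.mp hv with ⟨b, hb, _⟩
        simp [hb]
      rw [ihB hB.1 hdB h1] at hdef ⊢
      simp only [Option.bind_some] at hdef ⊢
      have hdC : (M.toGeneralModel.opSub (M.embE ⟨α, A⟩) (M.toGeneralModel.vE n α)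
          (M.embE ⟨_, C⟩)).isSome := by
        rcases Option.isSome_iff_exists.mp hdef with ⟨v, hv⟩
        rcases Option.bind_eq_some_iff.mp hv with ⟨c, hc, _⟩
        simp [hc]
      rw [ihC hB.2.1 hdC h2] at hdef ⊢
      simp only [Option.bind_some] at hdef ⊢
      have hdD : (M.toGeneralModel.opSub (M.embE ⟨α, A⟩) (M.toGeneralModel.vE n α)
          (M.embE ⟨_, D'⟩)).isSome := by
        rcases Option.isSome_iff_exists.mp hdef with ⟨v, hv⟩
        rcases Option.bind_eq_some_iff.mp hv with ⟨d, hd, _⟩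
        simp [hd]
      rw [ihD hB.2.2 hdD h3]
      simp only [Option.bind_some]
      exact M.cond_std B C D'
  | quot C _ => intro _ _ _; exact M.sub_quot A n C
  | eval C m δ _ => intro h; exact absurd h not_false
end
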